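/- arXiv:1308.6509 — 7 statements merged into one kernel-verified Lean document; each statement's English description precedes it below -/
import Mathlib

section
/- Let s be a string of length z ≥ 2 such that the prefix s[1..z-1] has a period q ≤ z/2 and s[z] ≠ s[z-q]. Then the smallest period of s exceeds z/2. -/
def IsPeriod {α : Type*} (s : List α) (q : ℕ) : Prop :=
  0 < q ∧ q ≤ s.length ∧ ∀ i, i + q < s.length → s[i]? = s[i + q]?

/-- Values at indices differing by a multiple of a period agree. -/
lemma isPeriod_rep {α : Type*} {t : List α} {g : ℕ} (h : IsPeriod t g) :
    ∀ (k i : ℕ), i + k * g < t.length → t[i]? = t[i + k * g]? := by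
  intro k
  induction k with
  | zero => intro i _; simp
  | succ k ih =>
    intro i hi
    have hg : 0 < g := h.1
    have h1 : i + g < t.length := by nlinarith [Nat.succ_mul k g]
    have e : i + g + k * g = i + (k + 1) * g := by ring
    have h2 := ih (i + g) (by omega)
    have h3 := h.2.2 i (by omega)
    rw [h3, h2, e]

/-- Weak Fine–Wilf: if `t` has periods `p` and `r` with `p + r ≤ |t|`,
then `t` has period `gcd p r`. -/
lemma fine_wilf_weak {α : Type*} : ∀ (n : ℕ) (t : List α) (p r : ℕ), p + r ≤ n →
    IsPeriod t p → IsPeriod t r → p + r ≤ t.length → IsPeriod t (Nat.gcd p r) := by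
  intro n
  induction n with
  | zero => intro t p r hn hp _ _; exact absurd hp.1 (by omega)
  | succ n ih =>
    intro t p r hn hp hr hlen
    have hp0 := hp.1
    have hr0 := hr.1
    rcases lt_trichotomy p r with h | h | h
    · -- p < r : replace r by r - p
      have key : IsPeriod t (r - p) := by
        refine ⟨by omega, by omega, ?_⟩
        intro i hi
        by_cases hc : i + r < t.length
        · have h1 := hr.2.2 i hc
          have h2 := hp.2.2 (i + (r - p)) (by omega)
          have e : i + (r - p) + p = i + r := by omega
          rw [e] at h2
          rw [h1, h2]
        · have hip : p ≤ i := by omega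
          have h1 := hp.2.2 (i - p) (by omega)
          have h2 := hr.2.2 (i - p) (by omega)
          have e1 : i - p + p = i := by omega
          have e2 : i - p + r = i + (r - p) := by omega
          rw [e1] at h1
          rw [e2] at h2
          rw [← h1, h2]
      have := ih t p (r - p) (by omega) hp key (by omega)
      rwa [Nat.gcd_sub_self_right (by omega)] at this
    · subst h
      rwa [Nat.gcd_self]
    · -- r < p : replace p by p - r
      have key : IsPeriod t (p - r) := by
        refine ⟨by omega, by omega, ?_⟩
        intro i hi
        by_cases hc : i + p < t.length
        · have h1 := hp.2.2 i hc
          have h2 := hr.2.2 (i + (p - r)) (by omega)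
          have e : i + (p - r) + r = i + p := by omega
          rw [e] at h2
          rw [h1, h2]
        · have hip : r ≤ i := by omega
          have h1 := hr.2.2 (i - r) (by omega)
          have h2 := hp.2.2 (i - r) (by omega)
          have e1 : i - r + r = i := by omega
          have e2 : i - r + p = i + (p - r) := by omega
          rw [e1] at h1
          rw [e2] at h2
          rw [← h1, h2]
      have := ih t (p - r) r (by omega) key hr (by omega)
      rwa [Nat.gcd_sub_self_left (by omega)] at this

/-- If `s` has length `z ≥ 2`, its prefix of length `z-1` has a period `q ≤ z/2`,
and the last letter `s[z]` differs from `s[z-q]` (0-based: `s.get? (z-1) ≠ s.get? (z-1-q)`),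
then every period of `s` exceeds `z/2`, i.e. the smallest period of `s` exceeds `z/2`. -/
theorem break_correctness {α : Type*} (s : List α) (z q : ℕ) (hz : 2 ≤ z)
    (hlen : s.length = z)
    (hq : IsPeriod (s.take (z - 1)) q) (hq2 : 2 * q ≤ z)
    (hne : s[z - 1]? ≠ s[z - 1 - q]?) :
    ∀ q', IsPeriod s q' → z < 2 * q' := by
  intro q' hq'
  by_contra hcon
  push_neg at hcon
  obtain ⟨hq'pos, hq'le, hq'per⟩ := hq'
  have hq0 : 0 < q := hq.1
  have tlen : (s.take (z - 1)).length = z - 1 := by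
    rw [List.length_take, hlen]; omega
  have hqle : q ≤ z - 1 := by have := hq.2.1; rwa [tlen] at this
  have hq'z : q' ≤ z - 1 := by omega
  -- last letter equals the one q' before it
  have last : s[z - 1 - q']? = s[z - 1]? := by
    have h1 := hq'per (z - 1 - q') (by rw [hlen]; omega)
    have e : z - 1 - q' + q' = z - 1 := by omega
    rwa [e] at h1
  by_cases hqq : q = q'
  · exact hne (by rw [hqq]; exact last.symm)
  · have hsum : q + q' ≤ z - 1 := by omega
    -- q' is also a period of the prefix
    have hq'take : IsPeriod (s.take (z - 1)) q' := by
      refine ⟨hq'pos, by rw [tlen]; omega, ?_⟩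
      intro i hi
      rw [tlen] at hi
      have h1 := hq'per i (by rw [hlen]; omega)
      rw [List.getElem?_take_of_lt (by omega), List.getElem?_take_of_lt (by omega)]
      exact h1
    have hg := fine_wilf_weak (q + q') (s.take (z - 1)) q q' le_rfl hq hq'take
      (by rw [tlen]; omega)
    set g := Nat.gcd q q' with hgdef
    have hgq : g ∣ q := Nat.gcd_dvd_left q q'
    have hgq' : g ∣ q' := Nat.gcd_dvd_right q q'
    -- connect the two indices in the prefix
    have conn : (s.take (z - 1))[z - 1 - q]? = (s.take (z - 1))[z - 1 - q']? := by
      rcases le_total q q' with hle | hle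
      · obtain ⟨k, hk⟩ := (Nat.dvd_sub hgq' hgq)
        have hk' : q' - q = k * g := by rw [hk]; ring
        have e : z - 1 - q' + k * g = z - 1 - q := by omega
        have h1 := isPeriod_rep hg k (z - 1 - q') (by rw [tlen]; omega)
        rw [e] at h1
        exact h1.symm
      · obtain ⟨k, hk⟩ := (Nat.dvd_sub hgq hgq')
        have hk' : q - q' = k * g := by rw [hk]; ring
        have e : z - 1 - q + k * g = z - 1 - q' := by omega
        have h1 := isPeriod_rep hg k (z - 1 - q) (by rw [tlen]; omega)
        rw [e] at h1
        exact h1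
    rw [List.getElem?_take_of_lt (by omega), List.getElem?_take_of_lt (by omega)] at conn
    exact hne (by rw [← last, ← conn])
end

section
/- Let w1 and w2 be strings of the same length n with smallest periods q1 and q2 respectively, where q1 ≠ q2 and q1 + q2 ≤ n. Then every window of q1 + q2 consecutive aligned positions contains a mismatch, i.e., for every i with i + q1 + q2 - 1 ≤ n there exists j ∈ [i, i + q1 + q2 - 1] with w1[j] ≠ w2[j]. -/
def SmallestPeriod {α : Type*} (s : List α) (q : ℕ) : Prop :=
  IsPeriod s q ∧ ∀ q', IsPeriod s q' → q ≤ q'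

/-- Fine–Wilf style lemma for functions on an initial segment `[0, n)`. -/
private lemma fw_aux {β : Type*} (n : ℕ) : ∀ N p q, p + q ≤ N → 0 < p → 0 < q → p + q ≤ n →
    ∀ f : ℕ → β, (∀ i, i + p < n → f i = f (i + p)) → (∀ i, i + q < n → f i = f (i + q)) →
    ∀ i, i + Nat.gcd p q < n → f i = f (i + Nat.gcd p q) := by
  intro N
  induction N with
  | zero => intro p q hN hp; omega
  | succ N ih =>
    intro p q hN hp hq hn f Hp Hq
    rcases lt_trichotomy p q with h | h | h
    · have Hqp : ∀ i, i + (q - p) < n → f i = f (i + (q - p)) := by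
        intro i hi
        by_cases hiq : i + q < n
        · have e1 := Hq i hiq
          have e2 := Hp (i + (q - p)) (by omega)
          have h2 : i + (q - p) + p = i + q := by omega
          rw [h2] at e2
          rw [e1, e2]
        · have e1 := Hp (i - p) (by omega)
          have e2 := Hq (i - p) (by omega)
          have h1 : i - p + p = i := by omega
          have h2 : i - p + q = i + (q - p) := by omega
          rw [h1] at e1
          rw [h2] at e2
          rw [← e1, e2]
      have key := ih p (q - p) (by omega) hp (by omega) (by omega) f Hp Hqp
      have hg : Nat.gcd p (q - p) = Nat.gcd p q := Nat.gcd_sub_self_right (le_of_lt h)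
      rwa [hg] at key
    · subst h
      simpa [Nat.gcd_self] using Hp
    · have Hpq : ∀ i, i + (p - q) < n → f i = f (i + (p - q)) := by
        intro i hi
        by_cases hip : i + p < n
        · have e1 := Hp i hip
          have e2 := Hq (i + (p - q)) (by omega)
          have h2 : i + (p - q) + q = i + p := by omega
          rw [h2] at e2
          rw [e1, e2]
        · have e1 := Hq (i - q) (by omega)
          have e2 := Hp (i - q) (by omega)
          have h1 : i - q + q = i := by omega
          have h2 : i - q + p = i + (p - q) := by omega
          rw [h1] at e1
          rw [h2] at e2
          rw [← e1, e2]
      have key := ih (p - q) q (by omega) (by omega) hq (by omega) f Hpq Hq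
      have hg : Nat.gcd (p - q) q = Nat.gcd p q := Nat.gcd_sub_self_left (le_of_lt h)
      rwa [hg] at key

private lemma fw {β : Type*} (n p q : ℕ) (hp : 0 < p) (hq : 0 < q) (hn : p + q ≤ n) (f : ℕ → β)
    (Hp : ∀ i, i + p < n → f i = f (i + p)) (Hq : ∀ i, i + q < n → f i = f (i + q)) :
    ∀ i, i + Nat.gcd p q < n → f i = f (i + Nat.gcd p q) :=
  fw_aux n (p + q) p q le_rfl hp hq hn f Hp Hq

private lemma step_many {β : Type*} (f : ℕ → β) (n p : ℕ)
    (Hp : ∀ i, i + p < n → f i = f (i + p)) :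
    ∀ m i, i + m * p < n → f i = f (i + m * p) := by
  intro m
  induction m with
  | zero => simp
  | succ m ih =>
    intro i h
    obtain ⟨t, ht⟩ : ∃ t, t = m * p := ⟨_, rfl⟩
    have hmul : (m + 1) * p = t + p := by rw [ht]; ring
    rw [hmul] at h ⊢
    have e1 : f i = f (i + p) := Hp i (by omega)
    have e2 : f (i + p) = f (i + p + t) := by
      have := ih (i + p) (by omega)
      rwa [← ht] at this
    rw [e1, e2]
    congr 1
    omega

private lemma exists_rep (p a i : ℕ) (hp : 0 < p) :
    ∃ k m, a ≤ k ∧ k < a + p ∧ ((i + m * p = k) ∨ (k + m * p = i)) := by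
  rcases le_or_gt a i with h | h
  · have key := Nat.div_add_mod (i - a) p
    have hr : (i - a) % p < p := Nat.mod_lt _ hp
    obtain ⟨x, hx⟩ : ∃ x, x = p * ((i - a) / p) := ⟨_, rfl⟩
    obtain ⟨r, hrr⟩ : ∃ r, r = (i - a) % p := ⟨_, rfl⟩
    rw [← hx, ← hrr] at key
    rw [← hrr] at hr
    refine ⟨a + r, (i - a) / p, by omega, by omega, Or.inr ?_⟩
    have : (i - a) / p * p = x := by rw [hx]; ring
    rw [this]
    omega
  · have key := Nat.div_add_mod (a - i - 1) p
    have hr : (a - i - 1) % p < p := Nat.mod_lt _ hp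
    obtain ⟨x, hx⟩ : ∃ x, x = p * ((a - i - 1) / p) := ⟨_, rfl⟩
    obtain ⟨r, hrr⟩ : ∃ r, r = (a - i - 1) % p := ⟨_, rfl⟩
    rw [← hx, ← hrr] at key
    rw [← hrr] at hr
    refine ⟨i + x + p, (a - i - 1) / p + 1, by omega, by omega, Or.inl ?_⟩
    have : ((a - i - 1) / p + 1) * p = x + p := by rw [hx]; ring
    rw [this]
    omega

/-- Extension lemma: a local period `d` on a window of length `≥ p + d` within a
string of period `p` extends to a global period `d`. -/
private lemma extend_period {β : Type*} (f : ℕ → β) (n p d a b : ℕ) (hp : 0 < p)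
    (hab : a + p + d ≤ b) (hbn : b ≤ n)
    (Hp : ∀ i, i + p < n → f i = f (i + p))
    (Hw : ∀ j, a ≤ j → j + d < b → f j = f (j + d)) :
    ∀ i, i + d < n → f i = f (i + d) := by
  intro i hi
  obtain ⟨k, m, hak, hka, hcase⟩ := exists_rep p a i hp
  have hstep := step_many f n p Hp
  have hk : f k = f (k + d) := Hw k hak (by omega)
  obtain ⟨t, ht⟩ : ∃ t, t = m * p := ⟨_, rfl⟩
  rw [← ht] at hcase
  rcases hcase with h | h
  · -- i + t = k
    have e1 : f i = f (i + t) := by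
      have := hstep m i (by rw [← ht]; omega)
      rwa [← ht] at this
    have e2 : f (i + d) = f (i + d + t) := by
      have := hstep m (i + d) (by rw [← ht]; omega)
      rwa [← ht] at this
    have h1 : i + t = k := h
    have h2 : i + d + t = k + d := by omega
    rw [e1, e2, h1, h2, hk]
  · -- k + t = i
    have e1 : f k = f (k + t) := by
      have := hstep m k (by rw [← ht]; omega)
      rwa [← ht] at this
    have e2 : f (k + d) = f (k + d + t) := by
      have := hstep m (k + d) (by rw [← ht]; omega)
      rwa [← ht] at this
    rw [h] at e1
    have h2 : k + d + t = i + d := by omega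
    rw [h2] at e2
    rw [← e1, ← e2]
    exact hk

/-- If `w1, w2` have the same length `n`, smallest periods `q1 ≠ q2` with
`q1 + q2 ≤ n`, then every window of `q1 + q2` consecutive aligned positions
contains a mismatch. -/
theorem window_contains_mismatch {α : Type*} (w1 w2 : List α) (q1 q2 : ℕ)
    (hlen : w1.length = w2.length)
    (h1 : SmallestPeriod w1 q1) (h2 : SmallestPeriod w2 q2)
    (hne : q1 ≠ q2) (hsum : q1 + q2 ≤ w1.length) :
    ∀ i, i + q1 + q2 ≤ w1.length →
      ∃ j, i ≤ j ∧ j < i + q1 + q2 ∧ w1[j]? ≠ w2[j]? := by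
  intro i hi
  by_contra hno
  push_neg at hno
  obtain ⟨⟨hq1pos, hq1le, Hp1⟩, hmin1⟩ := h1
  obtain ⟨⟨hq2pos, hq2le, Hp2⟩, hmin2⟩ := h2
  set n := w1.length with hn
  set d := Nat.gcd q1 q2 with hd
  have hdpos : 0 < d := Nat.gcd_pos_of_pos_left _ hq1pos
  have hd1 : d ≤ q1 := Nat.gcd_le_left _ hq1pos
  have hd2 : d ≤ q2 := Nat.gcd_le_right _ hq2pos
  -- the window function
  set g : ℕ → Option α := fun t => w1[i + t]? with hg
  have Hg1 : ∀ t, t + q1 < q1 + q2 → g t = g (t + q1) := by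
    intro t ht
    have := Hp1 (i + t) (by omega)
    simp only [hg]
    rw [this]
    congr 1
    omega
  have Hg2 : ∀ t, t + q2 < q1 + q2 → g t = g (t + q2) := by
    intro t ht
    have ea : w1[i + t]? = w2[i + t]? := hno (i + t) (by omega) (by omega)
    have eb : w2[i + t]? = w2[i + t + q2]? := Hp2 (i + t) (by omega)
    have ec : w2[i + t + q2]? = w1[i + t + q2]? :=
      (hno (i + t + q2) (by omega) (by omega)).symm
    simp only [hg]
    rw [ea, eb, ec]
    congr 1
    omega
  have Hgd : ∀ t, t + d < q1 + q2 → g t = g (t + d) :=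
    fw (q1 + q2) q1 q2 hq1pos hq2pos le_rfl g Hg1 Hg2
  -- window period for w1 in absolute coordinates
  have Hw1 : ∀ j, i ≤ j → j + d < i + q1 + q2 → w1[j]? = w1[j + d]? := by
    intro j hij hj
    have := Hgd (j - i) (by omega)
    simp only [hg] at this
    have h1' : i + (j - i) = j := by omega
    have h2' : i + (j - i + d) = j + d := by omega
    rwa [h1', h2'] at this
  -- window period for w2 in absolute coordinates
  have Hw2 : ∀ j, i ≤ j → j + d < i + q1 + q2 → w2[j]? = w2[j + d]? := by
    intro j hij hj
    have ea : w2[j]? = w1[j]? := (hno j hij (by omega)).symm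
    have eb : w1[j + d]? = w2[j + d]? := hno (j + d) (by omega) (by omega)
    rw [ea, Hw1 j hij hj, eb]
  rcases Nat.lt_or_ge q1 q2 with hlt | hge
  · -- extend period d to all of w2, contradicting minimality of q2
    have Hp2' : ∀ j, j + q2 < n → w2[j]? = w2[j + q2]? := by
      intro j hj; exact Hp2 j (by omega)
    have Hext : ∀ j, j + d < n → w2[j]? = w2[j + d]? :=
      extend_period (fun j => w2[j]?) n q2 d i (i + q1 + q2) hq2pos (by omega) (by omega) Hp2'
        (fun j hj hjb => Hw2 j hj hjb)
    have hisP : IsPeriod w2 d :=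
      ⟨hdpos, by omega, fun j hj => Hext j (by omega)⟩
    have := hmin2 d hisP
    omega
  · have hlt : q2 < q1 := by omega
    have Hext : ∀ j, j + d < n → w1[j]? = w1[j + d]? :=
      extend_period (fun j => w1[j]?) n q1 d i (i + q1 + q2) hq1pos (by omega) (by omega)
        (fun j hj => Hp1 j hj) (fun j hj hjb => Hw1 j hj hjb)
    have hisP : IsPeriod w1 d :=
      ⟨hdpos, by omega, fun j hj => Hext j hj⟩
    have := hmin1 d hisP
    omega
end

section
/- Let z and k be positive integers, and let w1, w2 be strings of equal length n ≥ z(k+1) such that w1 ≠ w2 and both w1 and w2 have (not necessarily smallest) periods at most z/2. Then the Hamming distance between w1 and w2 is at least k+1. -/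
def hamming {α : Type*} [DecidableEq α] (s t : List α) : ℕ :=
  ((Finset.range s.length).filter fun i => s[i]? ≠ t[i]?).card

/-- Proposition 4 of the paper: two distinct equal-length strings of length at
least `z(k+1)`, both having some period at most `z/2`, have Hamming distance at
least `k+1`. -/
theorem periodic_mismatches {α : Type*} [DecidableEq α] (z k : ℕ)
    (hz : 0 < z) (hk : 0 < k) (w1 w2 : List α)
    (hlen : w1.length = w2.length) (hn : z * (k + 1) ≤ w1.length)
    (hne : w1 ≠ w2)
    (hq1 : ∃ q, IsPeriod w1 q ∧ 2 * q ≤ z)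
    (hq2 : ∃ q, IsPeriod w2 q ∧ 2 * q ≤ z) :
    k + 1 ≤ hamming w1 w2 := by
  classical
  obtain ⟨q1, ⟨hq1pos, hq1len, hp1⟩, hq1z⟩ := hq1
  obtain ⟨q2, ⟨hq2pos, hq2len, hp2⟩, hq2z⟩ := hq2
  set n := w1.length with hn_def
  have hqz : q1 + q2 ≤ z := by omega
  -- key : every window of length z contains a mismatch
  have key : ∀ a, a + z ≤ n → ∃ i, a ≤ i ∧ i < a + z ∧ w1[i]? ≠ w2[i]? := by
    intro a ha
    by_contra hcon
    push_neg at hcon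
    -- upward propagation
    have up : ∀ i, a ≤ i → w1[i]? = w2[i]? := by
      intro i
      induction i using Nat.strong_induction_on with
      | _ i ih =>
        intro hai
        by_cases hi : i < a + q1 + q2
        · exact hcon i hai (by omega)
        · by_cases hin : i < n
          · have e1 : w1[i - q1]? = w1[i]? := by
              have := hp1 (i - q1) (by omega)
              rw [this]; congr 1; omega
            have e2 : w2[i - q1 - q2]? = w2[i - q1]? := by
              have := hp2 (i - q1 - q2) (by omega)
              rw [this]; congr 1; omega
            have e5 : w1[i - q1 - q2]? = w1[i - q2]? := by
              have := hp1 (i - q1 - q2) (by omega)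
              rw [this]; congr 1; omega
            have e4 : w2[i - q2]? = w2[i]? := by
              have := hp2 (i - q2) (by omega)
              rw [this]; congr 1; omega
            have h1 := ih (i - q1) (by omega) (by omega)
            have h2 := ih (i - q1 - q2) (by omega) (by omega)
            have h3 := ih (i - q2) (by omega) (by omega)
            calc w1[i]? = w1[i - q1]? := e1.symm
              _ = w2[i - q1]? := h1
              _ = w2[i - q1 - q2]? := e2.symm
              _ = w1[i - q1 - q2]? := h2.symm
              _ = w1[i - q2]? := e5
              _ = w2[i - q2]? := h3
              _ = w2[i]? := e4
          · rw [List.getElem?_eq_none (by omega), List.getElem?_eq_none (by omega)]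
    -- downward propagation
    have all : ∀ d i, a ≤ i + d → w1[i]? = w2[i]? := by
      intro d
      induction d with
      | zero => intro i hi; exact up i (by omega)
      | succ d ih =>
        intro i hi
        by_cases hid : a ≤ i + d
        · exact ih i hid
        · have hia : i < a := by omega
          have hiqn : i + q1 + q2 < n := by omega
          have e1 : w1[i]? = w1[i + q1]? := hp1 i (by omega)
          have e2 : w2[i + q1]? = w2[i + q1 + q2]? := hp2 (i + q1) (by omega)
          have e3 : w1[i + q2]? = w1[i + q1 + q2]? := by
            have := hp1 (i + q2) (by omega)
            rw [this]; congr 1; omega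
          have e4 : w2[i]? = w2[i + q2]? := hp2 i (by omega)
          have h1 := ih (i + q1) (by omega)
          have h2 := ih (i + q1 + q2) (by omega)
          have h3 := ih (i + q2) (by omega)
          calc w1[i]? = w1[i + q1]? := e1
            _ = w2[i + q1]? := h1
            _ = w2[i + q1 + q2]? := e2
            _ = w1[i + q1 + q2]? := h2.symm
            _ = w1[i + q2]? := e3.symm
            _ = w2[i + q2]? := h3
            _ = w2[i]? := e4.symm
    exact hne (List.ext_getElem? fun i => all a i (by omega))
  -- windows [m*z, m*z+z) for m < k+1 are within range
  have hzn : ∀ m, m < k + 1 → m * z + z ≤ n := by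
    intro m hm
    have : (m + 1) * z ≤ (k + 1) * z := Nat.mul_le_mul_right z (by omega)
    calc m * z + z = (m + 1) * z := by ring
      _ ≤ (k + 1) * z := this
      _ = z * (k + 1) := by ring
      _ ≤ n := hn
  choose f hf1 hf2 hf3 using fun m (hm : m < k + 1) => key (m * z) (hzn m hm)
  have hcard : (Finset.range (k + 1)).card ≤
      ((Finset.range n).filter fun i => w1[i]? ≠ w2[i]?).card := by
    apply Finset.card_le_card_of_injOn
      (fun m => if hm : m < k + 1 then f m hm else 0)
    · intro m hm
      rw [Finset.mem_coe, Finset.mem_range] at hm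
      simp only [dif_pos hm, Finset.mem_coe, Finset.mem_filter, Finset.mem_range]
      refine ⟨?_, hf3 m hm⟩
      have := hf2 m hm
      have := hzn m hm
      omega
    · intro m1 hm1 m2 hm2 heq
      rw [Finset.mem_coe, Finset.mem_range] at hm1 hm2
      simp only [dif_pos hm1, dif_pos hm2] at heq
      have a1 := hf1 m1 hm1; have b1 := hf2 m1 hm1
      have a2 := hf1 m2 hm2; have b2 := hf2 m2 hm2
      rw [heq] at a1 b1
      have h1 : m1 * z < m2 * z + z := by omega
      have h2 : m2 * z < m1 * z + z := by omega
      have h1' : m1 < m2 + 1 := by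
        have : m1 * z < (m2 + 1) * z := by rw [add_mul]; omega
        exact Nat.lt_of_mul_lt_mul_right this
      have h2' : m2 < m1 + 1 := by
        have : m2 * z < (m1 + 1) * z := by rw [add_mul]; omega
        exact Nat.lt_of_mul_lt_mul_right this
      omega
  simpa [hamming] using hcard
end

section
/- Let p be a string and z a positive integer. The greedy procedure that scans p left to right and, whenever the current window p[i..i+z-1] has smallest period exceeding z/2, selects it as a break and jumps to position i+z (otherwise advancing by one), selects the maximum possible number of pairwise disjoint length-z factors of p each having smallest period exceeding z/2. -/
/-- The length-`z` factor of `p` starting at (0-based) position `i` is a `z`-break: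
its smallest period exceeds `z/2`. -/
def IsBreakAt {α : Type*} (p : List α) (z i : ℕ) : Prop :=
  i + z ≤ p.length ∧ ∀ q, IsPeriod ((p.drop i).take z) q → z < 2 * q

/-- `S` is a set of starting positions of pairwise disjoint `z`-breaks of `p`. -/
def DisjointBreakFamily {α : Type*} (p : List α) (z : ℕ) (S : Finset ℕ) : Prop :=
  (∀ i ∈ S, IsBreakAt p z i) ∧ ∀ i ∈ S, ∀ j ∈ S, i < j → i + z ≤ j

open Classical in
/-- The greedy left-to-right procedure: if the window at `i` is a break, select it
and jump to `i + z`, otherwise advance by one. (`fuel` bounds the recursion.) -/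
noncomputable def greedyBreaks {α : Type*} (p : List α) (z : ℕ) : ℕ → ℕ → List ℕ
  | 0, _ => []
  | fuel + 1, i =>
    if i + z ≤ p.length then
      if IsBreakAt p z i then i :: greedyBreaks p z fuel (i + z)
      else greedyBreaks p z fuel (i + 1)
    else []

lemma greedy_mem {α : Type*} (p : List α) (z : ℕ) :
    ∀ fuel i, ∀ j ∈ greedyBreaks p z fuel i, i ≤ j ∧ IsBreakAt p z j := by
  intro fuel
  induction fuel with
  | zero => intro i j hj; simp [greedyBreaks] at hj
  | succ n ih =>
    intro i j hj
    rw [greedyBreaks] at hj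
    split at hj
    · split at hj
      · rcases List.mem_cons.mp hj with h | h
        · subst h; exact ⟨le_refl _, ‹_›⟩
        · obtain ⟨h1, h2⟩ := ih _ _ h; exact ⟨by omega, h2⟩
      · obtain ⟨h1, h2⟩ := ih _ _ hj; exact ⟨by omega, h2⟩
    · simp at hj

lemma greedy_pairwise {α : Type*} (p : List α) (z : ℕ) :
    ∀ fuel i, (greedyBreaks p z fuel i).Pairwise (fun a b => a + z ≤ b) := by
  intro fuel
  induction fuel with
  | zero => intro i; simp [greedyBreaks]
  | succ n ih =>
    intro i
    rw [greedyBreaks]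
    split
    · split
      · exact List.pairwise_cons.mpr
          ⟨fun j hj => by have := (greedy_mem p z n (i + z) j hj).1; omega, ih _⟩
      · exact ih _
    · simp

lemma greedy_max {α : Type*} (p : List α) (z : ℕ) (hz : 0 < z) :
    ∀ fuel i, p.length + 1 ≤ i + fuel →
    ∀ S : Finset ℕ, DisjointBreakFamily p z S → (∀ j ∈ S, i ≤ j) →
    S.card ≤ (greedyBreaks p z fuel i).length := by
  intro fuel
  induction fuel with
  | zero =>
    intro i hi S hS hge
    have : S = ∅ := Finset.eq_empty_of_forall_notMem (fun j hj => by
      have h1 := (hS.1 j hj).1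
      have h2 := hge j hj
      omega)
    simp [this]
  | succ n ih =>
    intro i hi S hS hge
    rw [greedyBreaks]
    split
    · split
      · -- i is a break
        classical
        have hpart := Finset.card_filter_add_card_filter_not
          (s := S) (p := fun j => i + z ≤ j)
        have hsmall : (S.filter (fun j => ¬ i + z ≤ j)).card ≤ 1 := by
          apply Finset.card_le_one.mpr
          intro a ha b hb
          obtain ⟨haS, ha2⟩ := Finset.mem_filter.mp ha
          obtain ⟨hbS, hb2⟩ := Finset.mem_filter.mp hb
          by_contra hne
          rcases Nat.lt_or_ge a b with hab | hab
          · have := hS.2 a haS b hbS hab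
            have := hge a haS
            omega
          · have hba : b < a := by omega
            have := hS.2 b hbS a haS hba
            have := hge b hbS
            omega
        have h1 : (S.filter (fun j => i + z ≤ j)).card ≤
            (greedyBreaks p z n (i + z)).length := by
          apply ih (i + z) (by omega)
          · exact ⟨fun j hj => hS.1 j (Finset.mem_filter.mp hj).1,
              fun a ha b hb hab => hS.2 a (Finset.mem_filter.mp ha).1
                b (Finset.mem_filter.mp hb).1 hab⟩
          · intro j hj; exact (Finset.mem_filter.mp hj).2
        simp only [List.length_cons]
        omega
      · -- i is not a break
        apply ih (i + 1) (by omega) S hS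
        intro j hj
        have h1 := hge j hj
        rcases Nat.eq_or_lt_of_le h1 with heq | hlt
        · exact absurd (heq ▸ hS.1 j hj) ‹¬ IsBreakAt p z i›
        · omega
    · have : S = ∅ := Finset.eq_empty_of_forall_notMem (fun j hj => by
        have h1 := (hS.1 j hj).1
        have h2 := hge j hj
        omega)
      simp [this]

/-- Lemma 8 of the paper: the greedy procedure selects pairwise disjoint `z`-breaks
of `p`, and their number is the maximum possible over all families of pairwise
disjoint `z`-breaks. -/
theorem greedy_breaks_optimal {α : Type*} (p : List α) (z : ℕ) (hz : 0 < z) :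
    (∀ i ∈ greedyBreaks p z (p.length + 1) 0, IsBreakAt p z i) ∧
    (greedyBreaks p z (p.length + 1) 0).Pairwise (fun i j => i + z ≤ j) ∧
    (∀ S : Finset ℕ, DisjointBreakFamily p z S →
      S.card ≤ (greedyBreaks p z (p.length + 1) 0).length) := by
  refine ⟨fun i hi => (greedy_mem p z _ _ i hi).2, greedy_pairwise p z _ _,
    fun S hS => greedy_max p z hz _ 0 (by omega) S hS (fun j _ => Nat.zero_le j)⟩
end

section
/- Let f = f_l f_r be a string of length at most 2m split so that |f_l|, |f_r| ≤ m, and let p be a pattern of length m containing at most 2k-1 pairwise disjoint z-breaks (i.e., fewer than 2k). Let f_l' be the shortest suffix of f_l containing exactly 3k disjoint z-breaks (or all of f_l if none exists), and f_r' the shortest prefix of f_r containing exactly 3k disjoint z-breaks (or all of f_r). Then every length-m factor of f whose Hamming distance to p is at most k lies entirely within f' = f_l' f_r'. -/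
theorem break_of_factor_eq {α : Type*} {s w : List α} {z j t : ℕ}
    (h : (w.drop t).take z = (s.drop j).take z) (ht : t + z ≤ w.length)
    (hb : IsBreakAt s z j) : IsBreakAt w z t :=
  ⟨ht, fun q hq => hb.2 q (h ▸ hq)⟩

theorem window_factor {α : Type*} (f : List α) (i m t z : ℕ) (htz : t + z ≤ m) :
    (((f.drop i).take m).drop t).take z = (f.drop (i + t)).take z := by
  rw [List.drop_take, List.take_take, min_eq_left (by omega), List.drop_drop]

theorem suffix_factor {α : Type*} (fl fr fl' : List α) (hsuf : fl'.IsSuffix fl) (j z : ℕ)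
    (hj : j + z ≤ fl'.length) :
    ((fl ++ fr).drop (fl.length - fl'.length + j)).take z = (fl'.drop j).take z := by
  obtain ⟨u, rfl⟩ := hsuf
  have h1 : (u ++ fl').length - fl'.length = u.length := by simp
  have h2 : u.length + j - u.length = j := by omega
  rw [h1, List.append_assoc, List.drop_append,
    List.drop_eq_nil_of_le (by omega), List.nil_append, h2,
    List.drop_append, List.take_append_of_le_length (by simp; omega)]

theorem prefix_factor {α : Type*} (fl fr fr' : List α) (hpre : fr'.IsPrefix fr) (j z : ℕ)
    (hj : j + z ≤ fr'.length) :
    ((fl ++ fr).drop (fl.length + j)).take z = (fr'.drop j).take z := by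
  obtain ⟨u, rfl⟩ := hpre
  have h2 : fl.length + j - fl.length = j := by omega
  rw [List.drop_append, List.drop_eq_nil_of_le (by omega),
    List.nil_append, h2, List.drop_append,
    List.take_append_of_le_length (by simp; omega)]

theorem factor_eq_of_get?_eq {α : Type*} (w p : List α) (j z : ℕ)
    (h : ∀ d, j ≤ d → d < j + z → w[d]? = p[d]?) :
    (p.drop j).take z = (w.drop j).take z := by
  apply List.ext_getElem?
  intro n
  by_cases hn : n < z
  · rw [List.getElem?_take_of_lt hn, List.getElem?_take_of_lt hn, List.getElem?_drop, List.getElem?_drop]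
    exact (h (j + n) (by omega) (by omega)).symm
  · rw [List.getElem?_eq_none_iff.2, List.getElem?_eq_none_iff.2] <;> simp <;> omega

theorem transfer {α : Type*} [DecidableEq α] (w p : List α) (k z : ℕ)
    (hlen : w.length = p.length) (hham : hamming w p ≤ k)
    (S : Finset ℕ) (hS : DisjointBreakFamily w z S) :
    ∃ T : Finset ℕ, DisjointBreakFamily p z T ∧ S.card ≤ T.card + k := by
  classical
  set D := (Finset.range w.length).filter (fun d => w[d]? ≠ p[d]?) with hD
  have hDcard : D.card ≤ k := hham
  set good := S.filter (fun j => ∀ d ∈ D, d < j ∨ j + z ≤ d) with hgood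
  set bad := S.filter (fun j => ¬ ∀ d ∈ D, d < j ∨ j + z ≤ d) with hbad
  have hsplit : good.card + bad.card = S.card := Finset.card_filter_add_card_filter_not _
  have hbadcard : bad.card ≤ D.card := by
    have hw : ∀ j ∈ bad, ∃ d ∈ D, j ≤ d ∧ d < j + z := by
      intro j hj
      have := (Finset.mem_filter.1 hj).2
      push_neg at this
      obtain ⟨d, hd, h1⟩ := this
      exact ⟨d, hd, by omega, by omega⟩
    set F : ℕ → ℕ := fun j => if h : ∃ d ∈ D, j ≤ d ∧ d < j + z then h.choose else 0 with hF
    have hFspec : ∀ j ∈ bad, F j ∈ D ∧ j ≤ F j ∧ F j < j + z := by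
      intro j hj
      have h := hw j hj
      simp only [hF, dif_pos h]
      exact ⟨h.choose_spec.1, h.choose_spec.2.1, h.choose_spec.2.2⟩
    apply Finset.card_le_card_of_injOn F (fun j hj => (hFspec j hj).1)
    intro j1 hj1 j2 hj2 heq
    by_contra hne
    have hb1 : j1 ∈ S := Finset.mem_of_mem_filter _ hj1
    have hb2 : j2 ∈ S := Finset.mem_of_mem_filter _ hj2
    obtain ⟨_, d1, e1⟩ := hFspec j1 hj1
    obtain ⟨_, d2, e2⟩ := hFspec j2 hj2
    rcases Nat.lt_or_ge j1 j2 with h | h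
    · have := hS.2 j1 hb1 j2 hb2 h; omega
    · have hlt : j2 < j1 := by omega
      have := hS.2 j2 hb2 j1 hb1 hlt; omega
  refine ⟨good, ⟨?_, ?_⟩, by omega⟩
  · intro j hj
    have hjS : j ∈ S := Finset.mem_of_mem_filter _ hj
    have hb := hS.1 j hjS
    have hcl : ∀ d ∈ D, d < j ∨ j + z ≤ d := (Finset.mem_filter.1 hj).2
    have hwl : j + z ≤ w.length := hb.1
    have heq : (p.drop j).take z = (w.drop j).take z := by
      apply factor_eq_of_get?_eq
      intro d hd1 hd2
      by_contra hne
      have hdD : d ∈ D := by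
        rw [hD, Finset.mem_filter, Finset.mem_range]
        exact ⟨by omega, hne⟩
      have := hcl d hdD
      omega
    exact break_of_factor_eq heq (hlen ▸ hb.1) hb
  · intro j1 hj1 j2 hj2 hlt
    exact hS.2 j1 (Finset.mem_of_mem_filter _ hj1) j2 (Finset.mem_of_mem_filter _ hj2) hlt

/-- Lemma 11 of the paper.  `f = fl ++ fr` with `|fl|, |fr| ≤ m`, the pattern `p`
of length `m` has fewer than `2k` pairwise disjoint `z`-breaks, `fl'` is the
shortest suffix of `fl` containing exactly `3k` disjoint `z`-breaks (or all of
`fl` if none exists), and `fr'` is the shortest prefix of `fr` containing exactly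
`3k` disjoint `z`-breaks (or all of `fr`).  Then every length-`m` factor of `f`
with Hamming distance at most `k` to `p` lies entirely within `f' = fl' ++ fr'`. -/
theorem matches_lie_in_trimmed {α : Type*} [DecidableEq α]
    (p fl fr fl' fr' : List α) (m k z : ℕ) (hz : 0 < z) (hk : 0 < k)
    (hp : p.length = m) (hfl : fl.length ≤ m) (hfr : fr.length ≤ m)
    (hpfew : ∀ S : Finset ℕ, DisjointBreakFamily p z S → S.card < 2 * k)
    (hsuf : fl'.IsSuffix fl) (hpre : fr'.IsPrefix fr)
    (hfl' : (∃ S : Finset ℕ, DisjointBreakFamily fl' z S ∧ S.card = 3 * k) ∨ fl' = fl)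
    (hfr' : (∃ S : Finset ℕ, DisjointBreakFamily fr' z S ∧ S.card = 3 * k) ∨ fr' = fr)
    (hflmin : ∀ s : List α, s.IsSuffix fl → s.length < fl'.length →
        ¬∃ S : Finset ℕ, DisjointBreakFamily s z S ∧ S.card = 3 * k)
    (hfrmin : ∀ s : List α, s.IsPrefix fr → s.length < fr'.length →
        ¬∃ S : Finset ℕ, DisjointBreakFamily s z S ∧ S.card = 3 * k)
    (i : ℕ) (hi : i + m ≤ (fl ++ fr).length)
    (hmatch : hamming (((fl ++ fr).drop i).take m) p ≤ k) :
    fl.length - fl'.length ≤ i ∧ i + m ≤ fl.length + fr'.length := by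
  have hflen : (fl ++ fr).length = fl.length + fr.length := by simp
  have hwlen : (((fl ++ fr).drop i).take m).length = m := by
    simp only [List.length_take, List.length_drop, hflen]
    omega
  have hwp : (((fl ++ fr).drop i).take m).length = p.length := by rw [hwlen, hp]
  constructor
  · by_contra h1
    push_neg at h1
    rcases hfl' with ⟨S, hSfam, hScard⟩ | rfl
    · have hfl'len : fl'.length ≤ fl.length := hsuf.length_le
      set a := fl.length - fl'.length with ha
      set c := a - i with hc
      have hic : i + c = a := by omega
      set S' := S.image (fun j => c + j) with hS'
      have hfact : ∀ j ∈ S, ((((fl ++ fr).drop i).take m).drop (c + j)).take z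
          = (fl'.drop j).take z ∧ c + j + z ≤ m := by
        intro j hj
        have hjz : j + z ≤ fl'.length := (hSfam.1 j hj).1
        have htz : c + j + z ≤ m := by omega
        refine ⟨?_, htz⟩
        rw [window_factor _ _ _ _ _ htz]
        have : i + (c + j) = fl.length - fl'.length + j := by omega
        rw [this]
        exact suffix_factor fl fr fl' hsuf j z hjz
      have hfam' : DisjointBreakFamily (((fl ++ fr).drop i).take m) z S' := by
        constructor
        · intro t ht
          obtain ⟨j, hj, rfl⟩ := Finset.mem_image.1 ht
          obtain ⟨heq, htz⟩ := hfact j hj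
          exact break_of_factor_eq heq (by omega) (hSfam.1 j hj)
        · intro t1 ht1 t2 ht2 hlt
          obtain ⟨j1, hj1, rfl⟩ := Finset.mem_image.1 ht1
          obtain ⟨j2, hj2, rfl⟩ := Finset.mem_image.1 ht2
          have := hSfam.2 j1 hj1 j2 hj2 (by omega)
          omega
      have hcard' : S'.card = 3 * k := by
        rw [hS', Finset.card_image_of_injective _ (add_right_injective c), hScard]
      obtain ⟨T, hTfam, hTcard⟩ := transfer _ p k z hwp hmatch S' hfam'
      have := hpfew T hTfam
      omega
    · omega
  · by_contra h1
    push_neg at h1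
    rcases hfr' with ⟨S, hSfam, hScard⟩ | rfl
    · have hfr'len : fr'.length ≤ fr.length := hpre.length_le
      have hile : i ≤ fl.length := by omega
      set S' := S.image (fun j => fl.length - i + j) with hS'
      have hfact : ∀ j ∈ S, ((((fl ++ fr).drop i).take m).drop (fl.length - i + j)).take z
          = (fr'.drop j).take z ∧ fl.length - i + j + z ≤ m := by
        intro j hj
        have hjz : j + z ≤ fr'.length := (hSfam.1 j hj).1
        have htz : fl.length - i + j + z ≤ m := by omega
        refine ⟨?_, htz⟩
        rw [window_factor _ _ _ _ _ htz]
        have : i + (fl.length - i + j) = fl.length + j := by omega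
        rw [this]
        exact prefix_factor fl fr fr' hpre j z hjz
      have hfam' : DisjointBreakFamily (((fl ++ fr).drop i).take m) z S' := by
        constructor
        · intro t ht
          obtain ⟨j, hj, rfl⟩ := Finset.mem_image.1 ht
          obtain ⟨heq, htz⟩ := hfact j hj
          exact break_of_factor_eq heq (by omega) (hSfam.1 j hj)
        · intro t1 ht1 t2 ht2 hlt
          obtain ⟨j1, hj1, rfl⟩ := Finset.mem_image.1 ht1
          obtain ⟨j2, hj2, rfl⟩ := Finset.mem_image.1 ht2
          have := hSfam.2 j1 hj1 j2 hj2 (by omega)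
          omega
      have hcard' : S'.card = 3 * k := by
        rw [hS', Finset.card_image_of_injective _ (add_right_injective _), hScard]
      obtain ⟨T, hTfam, hTcard⟩ := transfer _ p k z hwp hmatch S' hfam'
      have := hpfew T hTfam
      omega
    · omega
end

section
/- With f_l', f_r' defined as the shortest suffix/prefix of f_l, f_r containing exactly 3k disjoint z-breaks (or the whole string if fewer exist), the concatenation f' = f_l' f_r' contains at most 6k+1 pairwise disjoint z-breaks. -/
/-- If `fl'` contains at most `3k` pairwise disjoint `z`-breaks and so does `fr'`,
then the concatenation `f' = fl' ++ fr'` contains at most `6k+1` pairwise disjoint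
`z`-breaks. -/
theorem trimmed_text_few_breaks {α : Type*} (fl' fr' : List α) (k z : ℕ) (hz : 0 < z)
    (hl : ∀ S : Finset ℕ, DisjointBreakFamily fl' z S → S.card ≤ 3 * k)
    (hr : ∀ S : Finset ℕ, DisjointBreakFamily fr' z S → S.card ≤ 3 * k) :
    ∀ S : Finset ℕ, DisjointBreakFamily (fl' ++ fr') z S → S.card ≤ 6 * k + 1 := by
  classical
  intro S hS
  obtain ⟨hb, hd⟩ := hS
  set L := fl'.length with hL
  set Sl := S.filter (fun i => i + z ≤ L) with hSl
  set Sr := S.filter (fun i => L ≤ i) with hSr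
  set Sm := S.filter (fun i => ¬ (i + z ≤ L) ∧ ¬ (L ≤ i)) with hSm
  have hsub : S ⊆ Sl ∪ Sm ∪ Sr := by
    intro i hi
    simp only [Finset.mem_union, hSl, hSm, hSr, Finset.mem_filter]
    by_cases h1 : i + z ≤ L
    · exact Or.inl (Or.inl ⟨hi, h1⟩)
    · by_cases h2 : L ≤ i
      · exact Or.inr ⟨hi, h2⟩
      · exact Or.inl (Or.inr ⟨hi, h1, h2⟩)
  have hcard : S.card ≤ Sl.card + Sm.card + Sr.card := by
    calc S.card ≤ (Sl ∪ Sm ∪ Sr).card := Finset.card_le_card hsub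
    _ ≤ (Sl ∪ Sm).card + Sr.card := Finset.card_union_le _ _
    _ ≤ Sl.card + Sm.card + Sr.card := by
        have := Finset.card_union_le Sl Sm; omega
  -- left family
  have hSlcard : Sl.card ≤ 3 * k := by
    refine hl Sl ⟨?_, ?_⟩
    · intro i hi
      rw [hSl, Finset.mem_filter] at hi
      obtain ⟨hiS, hiL⟩ := hi
      obtain ⟨h1, h2⟩ := hb i hiS
      refine ⟨hiL, ?_⟩
      intro q hq
      apply h2
      rw [List.drop_append_of_le_length (by omega),
        List.take_append_of_le_length (by simp [List.length_drop]; omega)]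
      exact hq
    · intro i hi j hj hij
      rw [hSl, Finset.mem_filter] at hi hj
      exact hd i hi.1 j hj.1 hij
  -- middle: at most one element
  have hSmcard : Sm.card ≤ 1 := by
    refine Finset.card_le_one.mpr ?_
    intro a ha b hb'
    rw [hSm, Finset.mem_filter] at ha hb'
    by_contra hne
    rcases Nat.lt_or_ge a b with h | h
    · have := hd a ha.1 b hb'.1 h
      omega
    · rcases Nat.lt_or_ge b a with h' | h'
      · have := hd b hb'.1 a ha.1 h'
        omega
      · omega
  -- right family
  have hSrcard : Sr.card ≤ 3 * k := by
    have himg : Sr.card = (Sr.image (· - L)).card := by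
      rw [Finset.card_image_of_injOn]
      intro a ha b hb' hab
      rw [Finset.mem_coe, hSr, Finset.mem_filter] at ha hb'
      simp only at hab
      omega
    rw [himg]
    refine hr _ ⟨?_, ?_⟩
    · intro i hi
      rw [Finset.mem_image] at hi
      obtain ⟨a, ha, rfl⟩ := hi
      rw [hSr, Finset.mem_filter] at ha
      obtain ⟨haS, haL⟩ := ha
      obtain ⟨h1, h2⟩ := hb a haS
      rw [List.length_append] at h1
      refine ⟨by omega, ?_⟩
      intro q hq
      apply h2
      have : a = L + (a - L) := by omega
      rwa [this, List.drop_append, List.drop_eq_nil_of_le (by omega), List.nil_append, hL,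
        Nat.add_sub_cancel_left]
    · intro i hi j hj hij
      rw [Finset.mem_image] at hi hj
      obtain ⟨a, ha, rfl⟩ := hi
      obtain ⟨b, hb', rfl⟩ := hj
      rw [hSr, Finset.mem_filter] at ha hb'
      have hab : a < b := by omega
      have := hd a ha.1 b hb'.1 hab
      omega
  omega
end

section
/- Let p be a pattern of length m containing at least 2k pairwise disjoint z-breaks, let f be a text, and partition the alignment positions into consecutive windows of length k. If some factor f[i..j] has edit distance at most k to p, then the total number of break-marks falling in the window containing i and its two neighbouring windows is at least k. -/
/-- Cost structure for Levenshtein distance (formerly in Mathlib). -/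
structure Levenshtein.Cost (α β δ : Type*) where
  delete : α → δ
  insert : β → δ
  substitute : α → β → δ

def Levenshtein.defaultCost {α : Type*} [DecidableEq α] : Levenshtein.Cost α α ℕ where
  delete _ := 1
  insert _ := 1
  substitute a b := if a = b then 0 else 1

def Levenshtein.impl {α β δ : Type*} [AddZeroClass δ] [Min δ] (C : Levenshtein.Cost α β δ)
    (xs : List α) (y : β) (d : {r : List δ // 0 < r.length}) : {r : List δ // 0 < r.length} :=
  let ⟨ds, w⟩ := d
  xs.zip (ds.zip ds.tail) |>.foldr
    (init := ⟨[C.insert y + ds.getLast (List.ne_nil_of_length_pos w)], by simp⟩)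
    (fun ⟨x, d₀, d₁⟩ ⟨r, w⟩ =>
      ⟨min (C.delete x + r[0]) (min (C.insert y + d₀) (C.substitute x y + d₁)) :: r, by simp⟩)

def suffixLevenshtein {α β δ : Type*} [AddZeroClass δ] [Min δ] (C : Levenshtein.Cost α β δ)
    (xs : List α) (ys : List β) : {r : List δ // 0 < r.length} :=
  ys.foldr
    (Levenshtein.impl C xs)
    (xs.foldr (init := ⟨[0], by simp⟩) (fun a ⟨r, w⟩ => ⟨(C.delete a + r[0]) :: r, by simp⟩))

def levenshtein {α β δ : Type*} [AddZeroClass δ] [Min δ] (C : Levenshtein.Cost α β δ)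
    (xs : List α) (ys : List β) : δ :=
  let ⟨r, w⟩ := suffixLevenshtein C xs ys
  r[0]

section LevLemmas

variable {α : Type*}

@[simp] theorem Levenshtein.defaultCost_delete [DecidableEq α] (a : α) :
    (Levenshtein.defaultCost (α := α)).delete a = 1 := rfl

@[simp] theorem Levenshtein.defaultCost_insert [DecidableEq α] (a : α) :
    (Levenshtein.defaultCost (α := α)).insert a = 1 := rfl

@[simp] theorem Levenshtein.defaultCost_substitute [DecidableEq α] (a b : α) :
    (Levenshtein.defaultCost (α := α)).substitute a b = if a = b then 0 else 1 := rfl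

theorem Levenshtein.impl_cons' (C : Levenshtein.Cost α α ℕ) (x : α) (xs : List α) (y : α)
    (a e : ℕ) (es : List ℕ) (w : 0 < (a :: e :: es).length) :
    (Levenshtein.impl C (x :: xs) y ⟨a :: e :: es, w⟩).1 =
      min (C.delete x + (Levenshtein.impl C xs y ⟨e :: es, by simp⟩).1.headD 0)
        (min (C.insert y + a) (C.substitute x y + e)) ::
        (Levenshtein.impl C xs y ⟨e :: es, by simp⟩).1 := by
  simp only [Levenshtein.impl, List.zip_cons_cons, List.tail_cons, List.foldr_cons,
    List.getLast_cons_cons]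
  generalize List.foldr _ _ (List.zip xs ((e :: es).zip es)) = R
  rcases R with ⟨_ | ⟨b, r⟩, hR⟩
  · simp at hR
  · rfl

theorem lev_eq_headD (C : Levenshtein.Cost α α ℕ) (xs ys : List α) :
    levenshtein C xs ys = (suffixLevenshtein C xs ys).1.headD 0 := by
  unfold levenshtein
  generalize suffixLevenshtein C xs ys = s
  rcases s with ⟨_ | ⟨b, r⟩, hs⟩
  · simp at hs
  · rfl

theorem suffix_tail (C : Levenshtein.Cost α α ℕ) (x : α) (xs : List α) :
    ∀ ys : List α, (suffixLevenshtein C (x :: xs) ys).1.tail = (suffixLevenshtein C xs ys).1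
  | [] => rfl
  | y :: ys => by
    have ih := suffix_tail C x xs ys
    show (Levenshtein.impl C (x :: xs) y (suffixLevenshtein C (x :: xs) ys)).1.tail =
      (Levenshtein.impl C xs y (suffixLevenshtein C xs ys)).1
    generalize suffixLevenshtein C (x :: xs) ys = s1 at ih ⊢
    generalize suffixLevenshtein C xs ys = s2 at ih ⊢
    rcases s1 with ⟨_ | ⟨a, S⟩, w1⟩
    · simp at w1
    rcases s2 with ⟨_ | ⟨e, es⟩, w2⟩
    · simp at w2
    simp only [List.tail_cons] at ih
    subst ih
    rw [Levenshtein.impl_cons']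
    rfl

theorem suffix_nil_single (C : Levenshtein.Cost α α ℕ) :
    ∀ ys : List α, ∃ n, (suffixLevenshtein C [] ys).1 = [n]
  | [] => ⟨0, rfl⟩
  | y :: ys => by
    obtain ⟨n, hn⟩ := suffix_nil_single C ys
    show ∃ n, (Levenshtein.impl C [] y (suffixLevenshtein C [] ys)).1 = [n]
    generalize suffixLevenshtein C [] ys = s at hn ⊢
    rcases s with ⟨r, w⟩
    simp only at hn
    subst hn
    exact ⟨_, rfl⟩

@[simp] theorem levenshtein_nil_nil (C : Levenshtein.Cost α α ℕ) :
    levenshtein C ([] : List α) [] = 0 := rfl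

@[simp] theorem levenshtein_nil_cons (C : Levenshtein.Cost α α ℕ) (y : α) (ys : List α) :
    levenshtein C [] (y :: ys) = C.insert y + levenshtein C [] ys := by
  rw [lev_eq_headD, lev_eq_headD]
  obtain ⟨n, hn⟩ := suffix_nil_single C ys
  show (Levenshtein.impl C [] y (suffixLevenshtein C [] ys)).1.headD 0 =
    C.insert y + (suffixLevenshtein C [] ys).1.headD 0
  generalize suffixLevenshtein C [] ys = s at hn ⊢
  rcases s with ⟨r, w⟩
  simp only at hn
  subst hn
  rfl

@[simp] theorem levenshtein_cons_nil (C : Levenshtein.Cost α α ℕ) (x : α) (xs : List α) :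
    levenshtein C (x :: xs) [] = C.delete x + levenshtein C xs [] := rfl

theorem levenshtein_cons_cons (C : Levenshtein.Cost α α ℕ) (x : α) (xs : List α) (y : α)
    (ys : List α) :
    levenshtein C (x :: xs) (y :: ys) =
      min (C.delete x + levenshtein C xs (y :: ys))
        (min (C.insert y + levenshtein C (x :: xs) ys)
          (C.substitute x y + levenshtein C xs ys)) := by
  have h1 := suffix_tail C x xs ys
  rw [lev_eq_headD C (x :: xs) (y :: ys), lev_eq_headD C xs (y :: ys),
    lev_eq_headD C (x :: xs) ys, lev_eq_headD C xs ys]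
  show (Levenshtein.impl C (x :: xs) y (suffixLevenshtein C (x :: xs) ys)).1.headD 0 =
    min (C.delete x + (Levenshtein.impl C xs y (suffixLevenshtein C xs ys)).1.headD 0)
      (min (C.insert y + (suffixLevenshtein C (x :: xs) ys).1.headD 0)
        (C.substitute x y + (suffixLevenshtein C xs ys).1.headD 0))
  generalize suffixLevenshtein C (x :: xs) ys = s1 at h1 ⊢
  generalize suffixLevenshtein C xs ys = s2 at h1 ⊢
  rcases s1 with ⟨_ | ⟨a, S⟩, w1⟩
  · simp at w1
  rcases s2 with ⟨_ | ⟨e, es⟩, w2⟩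
  · simp at w2
  simp only [List.tail_cons] at h1
  subst h1
  rw [Levenshtein.impl_cons']
  rfl

end LevLemmas

open Levenshtein

section Helpers

variable {α : Type*} [DecidableEq α]

theorem lev_le_insert (C : Cost α α ℕ) (t : List α) (y : α) (u : List α) :
    levenshtein C t (y :: u) ≤ C.insert y + levenshtein C t u := by
  cases t with
  | nil => simp
  | cons x t =>
    rw [levenshtein_cons_cons]
    exact (min_le_right _ _).trans (min_le_left _ _)

theorem lev_split (C : Cost α α ℕ) :
    ∀ (t u v : List α), ∃ t1 t2, t = t1 ++ t2 ∧
      levenshtein C t1 u + levenshtein C t2 v ≤ levenshtein C t (u ++ v)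
  | t, [], v => ⟨[], t, rfl, by simp⟩
  | [], y :: u, v => by
    obtain ⟨t1, t2, h, hle⟩ := lev_split C [] u v
    obtain ⟨rfl, rfl⟩ := List.append_eq_nil_iff.mp h.symm
    refine ⟨[], [], rfl, ?_⟩
    rw [List.cons_append, levenshtein_nil_cons, levenshtein_nil_cons, add_assoc]
    exact add_le_add_right hle _
  | x :: t, y :: u, v => by
    have key : levenshtein C (x :: t) ((y :: u) ++ v) =
        min (C.delete x + levenshtein C t ((y :: u) ++ v))
          (min (C.insert y + levenshtein C (x :: t) (u ++ v))
            (C.substitute x y + levenshtein C t (u ++ v))) :=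
      levenshtein_cons_cons ..
    rcases min_cases (C.delete x + levenshtein C t ((y :: u) ++ v))
        (min (C.insert y + levenshtein C (x :: t) (u ++ v))
          (C.substitute x y + levenshtein C t (u ++ v))) with ⟨hEq, _⟩ | ⟨hEq, _⟩
    · obtain ⟨t1, t2, rfl, hle⟩ := lev_split C t (y :: u) v
      refine ⟨x :: t1, t2, rfl, ?_⟩
      rw [key, hEq]
      have h1 : levenshtein C (x :: t1) (y :: u) ≤ C.delete x + levenshtein C t1 (y :: u) := by
        rw [levenshtein_cons_cons]; exact min_le_left _ _
      refine le_trans (add_le_add_left h1 _) ?_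
      rw [add_assoc]
      exact add_le_add_right hle _
    · rw [key, hEq]
      rcases min_cases (C.insert y + levenshtein C (x :: t) (u ++ v))
          (C.substitute x y + levenshtein C t (u ++ v)) with ⟨hEq2, _⟩ | ⟨hEq2, _⟩
      · obtain ⟨t1, t2, h, hle⟩ := lev_split C (x :: t) u v
        refine ⟨t1, t2, h, ?_⟩
        rw [hEq2]
        refine le_trans (add_le_add_left (lev_le_insert C t1 y u) _) ?_
        rw [add_assoc]
        exact add_le_add_right (h ▸ hle) _
      · obtain ⟨t1, t2, rfl, hle⟩ := lev_split C t u v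
        refine ⟨x :: t1, t2, rfl, ?_⟩
        rw [hEq2]
        have h1 : levenshtein C (x :: t1) (y :: u) ≤
            C.substitute x y + levenshtein C t1 u := by
          rw [levenshtein_cons_cons]
          exact (min_le_right _ _).trans (min_le_right _ _)
        refine le_trans (add_le_add_left h1 _) ?_
        rw [add_assoc]
        exact add_le_add_right hle _
  termination_by t u _ => t.length + u.length
  decreasing_by all_goals (simp only [List.length_cons, List.length_nil]; omega)

theorem lev_nil_right : ∀ t : List α, levenshtein (defaultCost (α := α)) t [] = t.length
  | [] => by simp
  | x :: t => by simp [lev_nil_right t]; omega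

theorem lev_nil_left : ∀ u : List α, levenshtein (defaultCost (α := α)) [] u = u.length
  | [] => by simp
  | y :: u => by simp [lev_nil_left u]; omega

theorem lev_length : ∀ t u : List α,
    u.length ≤ t.length + levenshtein (defaultCost (α := α)) t u ∧
      t.length ≤ u.length + levenshtein (defaultCost (α := α)) t u
  | t, [] => by simp [lev_nil_right]
  | [], u => by simp [lev_nil_left]
  | x :: t, y :: u => by
    have h1 := lev_length t (y :: u)
    have h2 := lev_length (x :: t) u
    have h3 := lev_length t u
    rw [levenshtein_cons_cons]
    simp only [List.length_cons, Levenshtein.defaultCost_delete,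
      Levenshtein.defaultCost_insert, Levenshtein.defaultCost_substitute] at *
    by_cases hxy : x = y
    · subst hxy
      simp only [if_pos rfl]
      omega
    · simp only [if_neg hxy]
      omega
  termination_by t u => t.length + u.length
  decreasing_by all_goals (simp only [List.length_cons, List.length_nil]; omega)

theorem lev_eq_zero : ∀ {t u : List α},
    levenshtein (defaultCost (α := α)) t u = 0 → t = u
  | [], [], _ => rfl
  | [], y :: u, h => by
    rw [levenshtein_nil_cons] at h
    simp at h
  | x :: t, [], h => by
    rw [levenshtein_cons_nil] at h
    simp at h
  | x :: t, y :: u, h => by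
    rw [levenshtein_cons_cons] at h
    simp only [Levenshtein.defaultCost_delete, Levenshtein.defaultCost_insert,
      Levenshtein.defaultCost_substitute] at h
    by_cases hxy : x = y
    · subst hxy
      simp only [if_pos rfl, zero_add] at h
      have : levenshtein (defaultCost (α := α)) t u = 0 := by omega
      rw [lev_eq_zero this]
    · simp only [if_neg hxy] at h
      omega

end Helpers

section Aux

attribute [local instance] Classical.propDecidable

variable {α : Type*} [DecidableEq α]

/-- `o` is a "good" offset: the length-`z` piece of `p` at `o` occurs exactly in `f`
at a position `q` within distance `k` of `i + o`. -/
def GoodOff (f p : List α) (z i k o : ℕ) : Prop :=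
  ∃ q, q + z ≤ f.length ∧ (f.drop q).take z = (p.drop o).take z ∧
    i + o ≤ q + k ∧ q ≤ i + o + k

theorem lev_marking (p f : List α) (k z i : ℕ) (hz : 0 < z) :
    ∀ (os : List ℕ) (t : List α) (i0 a c0 : ℕ),
      (∀ o ∈ os, a ≤ o ∧ o + z ≤ p.length) →
      List.Pairwise (fun x y => x + z ≤ y) os →
      t <+: f.drop i0 →
      i + a ≤ i0 + c0 → i0 ≤ i + a + c0 →
      levenshtein Levenshtein.defaultCost t (p.drop a) + c0 ≤ k →
      os.length ≤ levenshtein Levenshtein.defaultCost t (p.drop a) +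
        os.countP (fun o => decide (GoodOff f p z i k o))
  | [], _, _, _, _, _, _, _, _, _, _ => by simp
  | o :: os, t, i0, a, c0, hmem, hpair, hpre, hlow, hhigh, hbud => by
    obtain ⟨ha, hoz⟩ := hmem o (by simp)
    rw [List.pairwise_cons] at hpair
    obtain ⟨hhead, htail⟩ := hpair
    -- decompose `p.drop a = g ++ (b ++ p.drop (o+z))`
    have hdec : p.drop a =
        (p.drop a).take (o - a) ++ ((p.drop o).take z ++ p.drop (o + z)) := by
      have h1 : (p.drop a).drop (o - a) = p.drop o := by
        rw [List.drop_drop]; all_goals (congr 1 <;> omega)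
      have h2 : (p.drop o).drop z = p.drop (o + z) := by
        rw [List.drop_drop]; all_goals (congr 1 <;> omega)
      calc p.drop a = (p.drop a).take (o - a) ++ (p.drop a).drop (o - a) :=
            (List.take_append_drop _ _).symm
        _ = _ := by rw [h1, ← h2, List.take_append_drop]
    have hgl : ((p.drop a).take (o - a)).length = o - a := by
      rw [List.length_take, List.length_drop]; omega
    have hbl : ((p.drop o).take z).length = z := by
      rw [List.length_take, List.length_drop]; omega
    rw [hdec] at hbud ⊢
    obtain ⟨t1, t23, rfl, hs1⟩ :=
      lev_split Levenshtein.defaultCost t ((p.drop a).take (o - a))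
        ((p.drop o).take z ++ p.drop (o + z))
    obtain ⟨t2, t3, rfl, hs2⟩ :=
      lev_split Levenshtein.defaultCost t23 ((p.drop o).take z) (p.drop (o + z))
    have hlen1 := lev_length t1 ((p.drop a).take (o - a))
    have hlen2 := lev_length t2 ((p.drop o).take z)
    rw [hgl] at hlen1
    rw [hbl] at hlen2
    -- prefix bookkeeping
    obtain ⟨r, hr⟩ := hpre
    have hq : f.drop (i0 + t1.length) = t2 ++ (t3 ++ r) := by
      have h1 : f.drop (i0 + t1.length) = (f.drop i0).drop t1.length := by
        rw [List.drop_drop]; all_goals (congr 1 <;> omega)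
      rw [h1, ← hr, List.append_assoc, List.drop_left, List.append_assoc]
    have hpre3 : t3 <+: f.drop (i0 + t1.length + t2.length) := by
      refine ⟨r, ?_⟩
      have h1 : f.drop (i0 + t1.length + t2.length) =
          (f.drop (i0 + t1.length)).drop t2.length := by
        rw [List.drop_drop]; all_goals (congr 1 <;> omega)
      rw [h1, hq, List.drop_left]
    -- apply the induction hypothesis
    have hIH := lev_marking p f k z i hz os t3 (i0 + t1.length + t2.length) (o + z)
      (c0 + levenshtein Levenshtein.defaultCost t1 ((p.drop a).take (o - a)) +
        levenshtein Levenshtein.defaultCost t2 ((p.drop o).take z))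
      (fun o' ho' => ⟨hhead o' ho', (hmem o' (List.mem_cons_of_mem _ ho')).2⟩)
      htail hpre3 (by omega) (by omega) (by omega)
    -- count the head
    rw [List.length_cons, List.countP_cons]
    by_cases he2 : levenshtein Levenshtein.defaultCost t2 ((p.drop o).take z) = 0
    · have ht2 : t2 = (p.drop o).take z := lev_eq_zero he2
      have hGood : GoodOff f p z i k o := by
        refine ⟨i0 + t1.length, ?_, ?_, ?_, ?_⟩
        · have hlen : (f.drop (i0 + t1.length)).length = f.length - (i0 + t1.length) :=
            List.length_drop
          rw [hq] at hlen
          simp only [List.length_append, ht2, hbl] at hlen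
          omega
        · rw [hq, ht2, List.take_left' hbl]
        · omega
        · omega
      simp only [decide_eq_true_eq, if_pos hGood]
      omega
    · omega
  termination_by os => os.length

end Aux

section Final

attribute [local instance] Classical.propDecidable

/-- Marking argument for the edit-distance version (Theorem 19 of the paper).
`O` is a set of offsets of `2k` pairwise disjoint `z`-breaks of the pattern `p`.
For every exact occurrence at position `q` in `f` of the break with offset `o`,
a mark is placed at position `q - o`.  If some factor `f[i..i+l-1]` has edit
(Levenshtein) distance at most `k` to `p`, then at least `k` marks fall into the
length-`k` window containing `i` together with its two neighbouring windows,
i.e. into `[⌊i/k⌋·k - k, ⌊i/k⌋·k + 2k)`. -/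
theorem edit_marking {α : Type*} [DecidableEq α] (p f : List α) (m k z : ℕ)
    (hm : p.length = m) (hk : 0 < k) (hz : 0 < z)
    (O : Finset ℕ) (hO : DisjointBreakFamily p z O) (hOcard : O.card = 2 * k)
    (i l : ℕ) (hil : i + l ≤ f.length)
    (hed : levenshtein Levenshtein.defaultCost ((f.drop i).take l) p ≤ k) :
    k ≤ ((O ×ˢ Finset.range f.length).filter fun oq =>
          oq.2 + z ≤ f.length ∧
          (f.drop oq.2).take z = (p.drop oq.1).take z ∧
          (i / k) * k ≤ oq.2 - oq.1 + k ∧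
          oq.2 - oq.1 < (i / k) * k + 2 * k).card := by

  obtain ⟨hbreak, hdisj⟩ := hO
  -- Step 1: at least k offsets in O are good.
  have hmain := lev_marking p f k z i hz (O.sort (· ≤ ·)) ((f.drop i).take l) i 0 0
    (fun o ho => ⟨Nat.zero_le _, (hbreak o ((Finset.mem_sort _).mp ho)).1⟩)
    (by
      refine (Finset.sortedLT_sort O).pairwise.imp_of_mem ?_
      intro a b hab hbb h
      exact hdisj a ((Finset.mem_sort _).mp hab) b ((Finset.mem_sort _).mp hbb) h)
    (List.take_prefix _ _)
    (by omega) (by omega)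
    (by rw [List.drop_zero]; omega)
  rw [List.drop_zero, Finset.length_sort, hOcard] at hmain
  have hcount : k ≤ (O.sort (· ≤ ·)).countP (fun o => decide (GoodOff f p z i k o)) := by
    omega
  -- Step 2: convert the list count to a Finset filter card.
  have hfilter : (O.sort (· ≤ ·)).countP (fun o => decide (GoodOff f p z i k o)) =
      (O.filter (GoodOff f p z i k)).card := by
    rw [List.Perm.countP_eq _ (Finset.sort_perm_toList O (· ≤ ·))]
    rw [Finset.card_def, Finset.filter_val, ← Multiset.countP_eq_card_filter]
    rw [← Finset.coe_toList O, Multiset.coe_countP]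
  -- Step 3: inject good offsets into the marked pairs.
  have hinj : (O.filter (GoodOff f p z i k)).card ≤
      ((O ×ˢ Finset.range f.length).filter fun oq =>
          oq.2 + z ≤ f.length ∧
          (f.drop oq.2).take z = (p.drop oq.1).take z ∧
          (i / k) * k ≤ oq.2 - oq.1 + k ∧
          oq.2 - oq.1 < (i / k) * k + 2 * k).card := by
    apply Finset.card_le_card_of_injOn
      (fun o => (o, if h : GoodOff f p z i k o then h.choose else 0))
    · intro o ho
      rw [Finset.mem_coe, Finset.mem_filter] at ho
      obtain ⟨hoO, hGood⟩ := ho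
      simp only [dif_pos hGood]
      obtain ⟨h1, h2, h3, h4⟩ := hGood.choose_spec
      have hD1 : i / k * k ≤ i := Nat.div_mul_le_self i k
      have hD2 : i < i / k * k + k := Nat.lt_div_mul_add hk
      rw [Finset.mem_coe, Finset.mem_filter, Finset.mem_product, Finset.mem_range]
      exact ⟨⟨hoO, by omega⟩, h1, h2, by omega, by omega⟩
    · intro a ha b hb hab
      simpa using congrArg Prod.fst hab
  omega


end Final
end
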